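/- arXiv:2207.07362 — 5 statements merged into one kernel-verified Lean document; each statement's English description precedes it below -/
import Mathlib

section
/- Let m ∈ ℕ and let f_m : [0,1] → ℝ be the piecewise affine function that on each interval I_k^m = [k/2^m, (k+1)/2^m] (for 0 ≤ k ≤ 2^m − 1) is given by f_m(x) = (k/2^m)² + (x − k/2^m)·(2k+1)/2^m. Then the Lipschitz seminorm of x ↦ x² − f_m(x) on [0,1] is at most 1/2^m. -/
noncomputable section

/-- Yarotsky's piecewise linear interpolant of the squaring function at dyadic
points of resolution `2^(-m)`. -/
def yarotsky (m : ℕ) (x : ℝ) : ℝ :=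
  let k : ℤ := ⌊x * 2 ^ m⌋
  ((k : ℝ) / 2 ^ m) ^ 2 + (x - (k : ℝ) / 2 ^ m) * (2 * (k : ℝ) + 1) / 2 ^ m

lemma phi_lip_le (s t : ℝ) (hst : s ≤ t) :
    |(Int.fract s ^ 2 - Int.fract s) - (Int.fract t ^ 2 - Int.fract t)| ≤ |s - t| := by
  have hs0 := Int.fract_nonneg s
  have hs1 := Int.fract_lt_one s
  have ht0 := Int.fract_nonneg t
  have ht1 := Int.fract_lt_one t
  have hus : Int.fract s = s - (⌊s⌋ : ℝ) := rfl
  have hut : Int.fract t = t - (⌊t⌋ : ℝ) := rfl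
  have habs : |s - t| = t - s := by rw [abs_sub_comm, abs_of_nonneg (by linarith)]
  rcases eq_or_lt_of_le (Int.floor_mono hst) with h | h
  · have hfr : Int.fract s - Int.fract t = s - t := by rw [hus, hut, h]; ring
    have hid : (Int.fract s ^ 2 - Int.fract s) - (Int.fract t ^ 2 - Int.fract t)
        = (s - t) * (Int.fract s + Int.fract t - 1) := by rw [← hfr]; ring
    rw [hid, abs_mul]
    have h1 : |Int.fract s + Int.fract t - 1| ≤ 1 := by
      rw [abs_le]; constructor <;> nlinarith
    nlinarith [abs_nonneg (s - t)]
  · have h1 : (⌊s⌋ : ℝ) + 1 ≤ (⌊t⌋ : ℝ) := by exact_mod_cast Int.add_one_le_iff.mpr h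
    have hA : |Int.fract s ^ 2 - Int.fract s| = Int.fract s - Int.fract s ^ 2 := by
      rw [abs_of_nonpos (by nlinarith)]; ring
    have hB : |Int.fract t ^ 2 - Int.fract t| = Int.fract t - Int.fract t ^ 2 := by
      rw [abs_of_nonpos (by nlinarith)]; ring
    calc |(Int.fract s ^ 2 - Int.fract s) - (Int.fract t ^ 2 - Int.fract t)|
        ≤ |Int.fract s ^ 2 - Int.fract s| + |Int.fract t ^ 2 - Int.fract t| :=
          abs_sub _ _
      _ ≤ |s - t| := by rw [hA, hB, habs]; nlinarith

lemma phi_lip (s t : ℝ) :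
    |(Int.fract s ^ 2 - Int.fract s) - (Int.fract t ^ 2 - Int.fract t)| ≤ |s - t| := by
  rcases le_total s t with h | h
  · exact phi_lip_le s t h
  · rw [abs_sub_comm, abs_sub_comm s t]; exact phi_lip_le t s h

lemma residual_eq (m : ℕ) (x : ℝ) :
    x ^ 2 - yarotsky m x
      = (Int.fract (x * 2 ^ m) ^ 2 - Int.fract (x * 2 ^ m)) / (2 ^ m) ^ 2 := by
  have hu : Int.fract (x * 2 ^ m) = x * 2 ^ m - (⌊x * 2 ^ m⌋ : ℝ) := rfl
  have h2 : (2 : ℝ) ^ m ≠ 0 := by positivity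
  have hk : (⌊x * 2 ^ m⌋ : ℝ) = x * 2 ^ m - Int.fract (x * 2 ^ m) := by rw [hu]; ring
  simp only [yarotsky]
  field_simp
  rw [hk]
  ring

theorem stmt_2 (m : ℕ) :
    ∀ x ∈ Set.Icc (0 : ℝ) 1, ∀ y ∈ Set.Icc (0 : ℝ) 1,
      |(x ^ 2 - yarotsky m x) - (y ^ 2 - yarotsky m y)| ≤ (1 / 2 ^ m) * |x - y| := by
  intro x _ y _
  rw [residual_eq, residual_eq, div_sub_div_same, abs_div]
  have h2 : (0 : ℝ) < 2 ^ m := by positivity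
  have key := phi_lip (x * 2 ^ m) (y * 2 ^ m)
  have hxy : |x * 2 ^ m - y * 2 ^ m| = |x - y| * 2 ^ m := by
    rw [← sub_mul, abs_mul, abs_of_pos h2]
  rw [hxy] at key
  rw [abs_of_pos (by positivity : (0:ℝ) < (2 ^ m : ℝ) ^ 2)]
  rw [div_le_iff₀ (by positivity)]
  calc |Int.fract (x * 2 ^ m) ^ 2 - Int.fract (x * 2 ^ m) -
        (Int.fract (y * 2 ^ m) ^ 2 - Int.fract (y * 2 ^ m))| ≤ |x - y| * 2 ^ m := key
    _ = 1 / 2 ^ m * |x - y| * (2 ^ m) ^ 2 := by field_simp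
end
end

section
/- Let M, N > 0, m ∈ ℕ, and let f_m : [0,1] → ℝ be a function with Lipschitz seminorm of (x ↦ x² − f_m(x)) on [0,1] at most 1/2^m. Define ×̂_m(x,y) = ((M+N)²/4)·( f_m(|x+y|/(M+N)) − f_m(|x−y|/(M+N)) ) for (x,y) ∈ [−M,M] × [−N,N]. Then for every fixed y ∈ [−N,N], the Lipschitz seminorm of x ↦ xy − ×̂_m(x,y) on [−M,M] is at most (M+N)/2^{m+1}. -/
theorem stmt_3 (M N : ℝ) (hM : 0 < M) (hN : 0 < N) (m : ℕ) (fm : ℝ → ℝ)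
    (hfm : ∀ x ∈ Set.Icc (0 : ℝ) 1, ∀ y ∈ Set.Icc (0 : ℝ) 1,
      |(x ^ 2 - fm x) - (y ^ 2 - fm y)| ≤ (1 / 2 ^ m) * |x - y|) :
    ∀ y ∈ Set.Icc (-N) N, ∀ x₁ ∈ Set.Icc (-M) M, ∀ x₂ ∈ Set.Icc (-M) M,
      |(x₁ * y - (M + N) ^ 2 / 4 *
          (fm (|x₁ + y| / (M + N)) - fm (|x₁ - y| / (M + N))))
        - (x₂ * y - (M + N) ^ 2 / 4 *
          (fm (|x₂ + y| / (M + N)) - fm (|x₂ - y| / (M + N))))|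
        ≤ (M + N) / 2 ^ (m + 1) * |x₁ - x₂| := by
  intro y hy x₁ hx₁ x₂ hx₂
  obtain ⟨hy1, hy2⟩ := hy
  obtain ⟨h11, h12⟩ := hx₁
  obtain ⟨h21, h22⟩ := hx₂
  have hS : (0 : ℝ) < M + N := by linarith
  set S := M + N with hSdef
  have mem : ∀ a : ℝ, |a| ≤ S → |a| / S ∈ Set.Icc (0 : ℝ) 1 := by
    intro a ha
    exact ⟨by positivity, by rw [div_le_one hS]; exact ha⟩
  have hya : |y| ≤ N := abs_le.2 ⟨hy1, hy2⟩
  have hx1a : |x₁| ≤ M := abs_le.2 ⟨h11, h12⟩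
  have hx2a : |x₂| ≤ M := abs_le.2 ⟨h21, h22⟩
  have ha1 := mem (x₁ + y) (by calc |x₁ + y| ≤ |x₁| + |y| := abs_add_le _ _
    _ ≤ S := by rw [hSdef]; linarith)
  have ha2 := mem (x₂ + y) (by calc |x₂ + y| ≤ |x₂| + |y| := abs_add_le _ _
    _ ≤ S := by rw [hSdef]; linarith)
  have hb1 := mem (x₁ - y) (by calc |x₁ - y| ≤ |x₁| + |y| := abs_sub _ _
    _ ≤ S := by rw [hSdef]; linarith)
  have hb2 := mem (x₂ - y) (by calc |x₂ - y| ≤ |x₂| + |y| := abs_sub _ _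
    _ ≤ S := by rw [hSdef]; linarith)
  have eq1 : ∀ x : ℝ,
      x * y - S ^ 2 / 4 * (fm (|x + y| / S) - fm (|x - y| / S))
        = S ^ 2 / 4 * (((|x + y| / S) ^ 2 - fm (|x + y| / S))
            - ((|x - y| / S) ^ 2 - fm (|x - y| / S))) := by
    intro x
    have : x * y = S ^ 2 / 4 * ((|x + y| / S) ^ 2 - (|x - y| / S) ^ 2) := by
      rw [div_pow, div_pow, sq_abs, sq_abs]
      field_simp
      ring
    rw [this]; ring
  rw [eq1 x₁, eq1 x₂]
  have h1 := hfm _ ha1 _ ha2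
  have h2 := hfm _ hb1 _ hb2
  have d1 : |(|x₁ + y| / S) - |x₂ + y| / S| ≤ |x₁ - x₂| / S := by
    rw [div_sub_div_same, abs_div, abs_of_pos hS]
    refine (div_le_div_iff_of_pos_right hS).mpr ?_
    calc abs (|x₁ + y| - |x₂ + y|) ≤ |(x₁ + y) - (x₂ + y)| := abs_abs_sub_abs_le_abs_sub _ _
      _ = |x₁ - x₂| := by ring_nf
  have d2 : |(|x₁ - y| / S) - |x₂ - y| / S| ≤ |x₁ - x₂| / S := by
    rw [div_sub_div_same, abs_div, abs_of_pos hS]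
    refine (div_le_div_iff_of_pos_right hS).mpr ?_
    calc abs (|x₁ - y| - |x₂ - y|) ≤ |(x₁ - y) - (x₂ - y)| := abs_abs_sub_abs_le_abs_sub _ _
      _ = |x₁ - x₂| := by ring_nf
  set A1 := (|x₁ + y| / S) ^ 2 - fm (|x₁ + y| / S)
  set A2 := (|x₂ + y| / S) ^ 2 - fm (|x₂ + y| / S)
  set B1 := (|x₁ - y| / S) ^ 2 - fm (|x₁ - y| / S)
  set B2 := (|x₂ - y| / S) ^ 2 - fm (|x₂ - y| / S)
  have tri : |S ^ 2 / 4 * (A1 - B1) - S ^ 2 / 4 * (A2 - B2)|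
      ≤ S ^ 2 / 4 * (|A1 - A2| + |B1 - B2|) := by
    have : S ^ 2 / 4 * (A1 - B1) - S ^ 2 / 4 * (A2 - B2)
        = S ^ 2 / 4 * ((A1 - A2) - (B1 - B2)) := by ring
    rw [this, abs_mul, abs_of_nonneg (by positivity : (0:ℝ) ≤ S ^ 2 / 4)]
    gcongr
    exact abs_sub _ _
  refine tri.trans ?_
  have hbound : |A1 - A2| + |B1 - B2| ≤ (1 / 2 ^ m) * (2 * |x₁ - x₂| / S) := by
    have e1 : |A1 - A2| ≤ (1 / 2 ^ m) * (|x₁ - x₂| / S) := by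
      refine h1.trans ?_
      exact mul_le_mul_of_nonneg_left d1 (by positivity)
    have e2 : |B1 - B2| ≤ (1 / 2 ^ m) * (|x₁ - x₂| / S) := by
      refine h2.trans ?_
      exact mul_le_mul_of_nonneg_left d2 (by positivity)
    have : (1 / 2 ^ m : ℝ) * (2 * |x₁ - x₂| / S)
        = (1 / 2 ^ m) * (|x₁ - x₂| / S) + (1 / 2 ^ m) * (|x₁ - x₂| / S) := by ring
    rw [this]
    linarith
  calc S ^ 2 / 4 * (|A1 - A2| + |B1 - B2|)
      ≤ S ^ 2 / 4 * ((1 / 2 ^ m) * (2 * |x₁ - x₂| / S)) :=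
        mul_le_mul_of_nonneg_left hbound (by positivity)
    _ = S / 2 ^ (m + 1) * |x₁ - x₂| := by
        field_simp
        ring
end

section
/- Let λ > 0 and define x ⋆ y = σ(y + λx − λ) − σ(−y + λx − λ) for x ∈ [0,1] and y ∈ [−λ, λ], where σ(t) = max{t, 0} is the ReLU function. Then: (i) for x ∈ {0, 1} and y ∈ [−λ, λ], x ⋆ y = x·y; (ii) for x ∈ [0,1] and y ∈ [0, λ], 0 ≤ x ⋆ y ≤ x·y; (iii) for x ∈ [0,1] and y ∈ [−λ, 0], x·y ≤ x ⋆ y ≤ 0. -/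
noncomputable section

/-- The ReLU activation function. -/
def relu (t : ℝ) : ℝ := max t 0

/-- The star operation `x ⋆ y = σ(y + λx − λ) − σ(−y + λx − λ)`. -/
def star (lam x y : ℝ) : ℝ := relu (y + lam * x - lam) - relu (-y + lam * x - lam)

theorem stmt_7 (lam : ℝ) (hlam : 0 < lam) :
    (∀ x ∈ ({0, 1} : Set ℝ), ∀ y ∈ Set.Icc (-lam) lam, star lam x y = x * y) ∧
    (∀ x ∈ Set.Icc (0 : ℝ) 1, ∀ y ∈ Set.Icc 0 lam,
      0 ≤ star lam x y ∧ star lam x y ≤ x * y) ∧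
    (∀ x ∈ Set.Icc (0 : ℝ) 1, ∀ y ∈ Set.Icc (-lam) 0,
      x * y ≤ star lam x y ∧ star lam x y ≤ 0) := by
  refine ⟨?_, ?_, ?_⟩
  · rintro x (rfl | rfl) y ⟨hy1, hy2⟩
    · simp only [_root_.star, relu]
      rw [max_eq_right (by nlinarith), max_eq_right (by nlinarith)]; ring
    · simp only [_root_.star, relu]
      rcases le_total 0 y with h | h
      · rw [max_eq_left (by nlinarith), max_eq_right (by nlinarith)]; ring
      · rw [max_eq_right (by nlinarith), max_eq_left (by nlinarith)]; ring
  · rintro x ⟨hx1, hx2⟩ y ⟨hy1, hy2⟩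
    simp only [_root_.star, relu]
    rcases max_cases (y + lam * x - lam) 0 with ⟨h1, h1'⟩ | ⟨h1, h1'⟩ <;>
      rcases max_cases (-y + lam * x - lam) 0 with ⟨h2, h2'⟩ | ⟨h2, h2'⟩ <;>
      constructor <;> nlinarith [mul_nonneg hy1 (sub_nonneg.2 hx2)]
  · rintro x ⟨hx1, hx2⟩ y ⟨hy1, hy2⟩
    simp only [_root_.star, relu]
    rcases max_cases (y + lam * x - lam) 0 with ⟨h1, h1'⟩ | ⟨h1, h1'⟩ <;>
      rcases max_cases (-y + lam * x - lam) 0 with ⟨h2, h2'⟩ | ⟨h2, h2'⟩ <;>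
      constructor <;> nlinarith [mul_nonneg (by linarith : (0:ℝ) ≤ y + lam) (sub_nonneg.2 hx2)]
end
end

section
/- Let λ > 0 and define x ⋆ y = σ(y + λx − λ) − σ(−y + λx − λ) with σ(t) = max{t,0}. Then for all x ∈ [0,1] and y₁, y₂ ∈ [−λ, λ] with y₂ − y₁ ∈ [−λ, λ] (assume |y₂ − y₁| ≤ λ), it holds that min{y₁, y₂} ≤ y₁ + x ⋆ (y₂ − y₁) ≤ max{y₁, y₂}. -/
noncomputable section

theorem stmt_8 (lam : ℝ) (hlam : 0 < lam) :
    ∀ x ∈ Set.Icc (0 : ℝ) 1, ∀ y₁ ∈ Set.Icc (-lam) lam, ∀ y₂ ∈ Set.Icc (-lam) lam,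
      |y₂ - y₁| ≤ lam →
      min y₁ y₂ ≤ y₁ + star lam x (y₂ - y₁) ∧
        y₁ + star lam x (y₂ - y₁) ≤ max y₁ y₂ := by
  rintro x ⟨hx0, hx1⟩ y₁ ⟨hy11, hy12⟩ y₂ ⟨hy21, hy22⟩ hy
  have hlx0 : 0 ≤ lam * x := mul_nonneg hlam.le hx0
  have hlx1 : lam * x ≤ lam := mul_le_of_le_one_right hlam.le hx1
  rw [abs_le] at hy
  unfold _root_.star relu
  rcases le_total (y₂ - y₁ + lam * x - lam) 0 with h1 | h1 <;>
    rcases le_total (-(y₂ - y₁) + lam * x - lam) 0 with h2 | h2 <;>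
    rcases le_total y₁ y₂ with h3 | h3 <;>
    simp only [min_eq_left h3, min_eq_right h3, max_eq_right h3, max_eq_left h3,
      max_eq_right h1, max_eq_left h1, max_eq_right h2, max_eq_left h2] <;>
    constructor <;> linarith
end
end

section
/- Consider the Lax-Friedrichs update U_j^{n+1} = (U_{j+1}^n + U_{j−1}^n)/2 − (λ/2)·(g(U_{j+1}^n) − g(U_{j−1}^n)) with g differentiable, |g'| ≤ F, and CFL number λ = 1/F. Then the scheme is total variation diminishing: ∑_j |U_{j+1}^{n+1} − U_j^{n+1}| ≤ ∑_j |U_{j+1}^n − U_j^n|, whenever these sums are finite (e.g. the sequence U^n is eventually constant on both ends). -/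
lemma abs_split (a b : ℝ) (hb : |b| ≤ |a|) : |a - b| + |a + b| = 2 * |a| := by
  rcases abs_cases a with ⟨h1, h2⟩ <;> rcases abs_cases b with ⟨h3, h4⟩ <;>
    rcases abs_cases (a - b) with ⟨h5, h6⟩ <;> rcases abs_cases (a + b) with ⟨h7, h8⟩ <;>
    linarith

set_option maxHeartbeats 1000000 in
theorem stmt_15 (F : ℝ) (hF : 0 < F) (g : ℝ → ℝ) (hdiff : Differentiable ℝ g)
    (hg : ∀ u : ℝ, |deriv g u| ≤ F)
    (lam : ℝ) (hlam : lam = 1 / F)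
    (U Unext : ℤ → ℝ)
    (hscheme : ∀ j : ℤ, Unext j =
      (U (j + 1) + U (j - 1)) / 2 - lam / 2 * (g (U (j + 1)) - g (U (j - 1))))
    (hsum : Summable fun j : ℤ => |U (j + 1) - U j|) :
    ∑' j : ℤ, |Unext (j + 1) - Unext j| ≤ ∑' j : ℤ, |U (j + 1) - U j| := by
  set D : ℤ → ℝ := fun k => U (k + 1) - U k with hD
  set h : ℤ → ℝ := fun k => g (U (k + 1)) - g (U k) with hh
  -- Lipschitz bound : |h k| ≤ F * |D k|
  have hlip : ∀ x y : ℝ, |g y - g x| ≤ F * |y - x| := by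
    intro x y
    have := Convex.norm_image_sub_le_of_norm_deriv_le
      (f := g) (s := (Set.univ : Set ℝ))
      (fun u _ => hdiff u)
      (fun u _ => by simpa [Real.norm_eq_abs] using hg u)
      convex_univ (Set.mem_univ x) (Set.mem_univ y)
    simpa [Real.norm_eq_abs] using this
  have hlamF : lam * F = 1 := by
    rw [hlam]; field_simp
  have hlam0 : 0 ≤ lam := by rw [hlam]; positivity
  have hkey : ∀ k : ℤ, |lam * h k| ≤ |D k| := by
    intro k
    have := hlip (U k) (U (k + 1))
    calc |lam * h k| = lam * |h k| := by rw [abs_mul, abs_of_nonneg hlam0]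
      _ ≤ lam * (F * |D k|) := by
          apply mul_le_mul_of_nonneg_left _ hlam0
          simpa [hh, hD] using this
      _ = |D k| := by rw [← mul_assoc, hlamF, one_mul]
  set f : ℤ → ℝ := fun k => |D k - lam * h k| / 2 with hf
  set e : ℤ → ℝ := fun k => |D k + lam * h k| / 2 with he
  have hfe : ∀ k, f k + e k = |D k| := by
    intro k
    have := abs_split (D k) (lam * h k) (hkey k)
    simp only [hf, he]
    linarith
  have hfle : ∀ k, f k ≤ |D k| := by
    intro k
    have h1 : 0 ≤ e k := by positivity
    linarith [hfe k]
  have hele : ∀ k, e k ≤ |D k| := by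
    intro k
    have h1 : 0 ≤ f k := by positivity
    linarith [hfe k]
  have hsf : Summable f :=
    Summable.of_nonneg_of_le (fun k => by positivity) hfle hsum
  have hse : Summable e :=
    Summable.of_nonneg_of_le (fun k => by positivity) hele hsum
  -- pointwise bound
  have hpt : ∀ j : ℤ, |Unext (j + 1) - Unext j| ≤ f (j + 1) + e (j - 1) := by
    intro j
    have h1 := hscheme (j + 1)
    have h2 := hscheme j
    have e1 : (j + 1 : ℤ) + 1 = j + 1 + 1 := rfl
    have e2 : (j + 1 : ℤ) - 1 = j := by ring
    rw [e2] at h1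
    have hval : Unext (j + 1) - Unext j =
        ((D (j + 1) - lam * h (j + 1)) + (D (j - 1) + lam * h (j - 1))) / 2 := by
      rw [h1, h2]
      simp only [hD, hh]
      have e3 : (j : ℤ) - 1 + 1 = j := by ring
      rw [e3]
      ring
    rw [hval]
    calc |((D (j + 1) - lam * h (j + 1)) + (D (j - 1) + lam * h (j - 1))) / 2|
        ≤ (|D (j + 1) - lam * h (j + 1)| + |D (j - 1) + lam * h (j - 1)|) / 2 := by
          rw [abs_div]
          apply div_le_div_of_nonneg_right (abs_add_le _ _) (by norm_num) |>.trans
          norm_num [abs_of_nonneg]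
      _ = f (j + 1) + e (j - 1) := by simp only [hf, he]; ring
  -- summability of the shifted functions
  have hsf' : Summable (fun j : ℤ => f (j + 1)) :=
    (Equiv.addRight (1 : ℤ)).summable_iff.mpr hsf
  have hse' : Summable (fun j : ℤ => e (j - 1)) :=
    (Equiv.subRight (1 : ℤ)).summable_iff.mpr hse
  have hsum' : Summable (fun j : ℤ => |Unext (j + 1) - Unext j|) :=
    Summable.of_nonneg_of_le (fun j => abs_nonneg _) hpt (hsf'.add hse')
  calc ∑' j : ℤ, |Unext (j + 1) - Unext j|
      ≤ ∑' j : ℤ, (f (j + 1) + e (j - 1)) := Summable.tsum_le_tsum hpt hsum' (hsf'.add hse')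
    _ = (∑' j : ℤ, f (j + 1)) + ∑' j : ℤ, e (j - 1) := Summable.tsum_add hsf' hse'
    _ = (∑' k : ℤ, f k) + ∑' k : ℤ, e k := by
        congr 1
        · exact (Equiv.addRight (1 : ℤ)).tsum_eq f
        · exact (Equiv.subRight (1 : ℤ)).tsum_eq e
    _ = ∑' k : ℤ, (f k + e k) := (Summable.tsum_add hsf hse).symm
    _ = ∑' k : ℤ, |D k| := by exact tsum_congr hfe
end
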